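/- arXiv:1705.06738 — 6 statements merged into one kernel-verified Lean document; each statement's English description precedes it below -/
import Mathlib

section
/- The homeomorphic embedding relation on finite lists over a well-quasi-ordered set, where l₁ embeds into l₂ iff l₁ is obtained from l₂ by deleting some elements and replacing remaining elements by elements below them in the quasi-order (Higman's sublist embedding), is a well-quasi-ordering: every infinite sequence of lists contains indices i < j with the i-th list embedding into the j-th list. -/
/-- Higman's sublist embedding over a base relation `r`. -/
inductive ListEmb {A : Type*} (r : A → A → Prop) : List A → List A → Prop
  | nil (l : List A) : ListEmb r [] l
  | cons {x y : A} {xs ys : List A} :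
      r x y → ListEmb r xs ys → ListEmb r (x :: xs) (y :: ys)
  | skip {l : List A} {y : A} {ys : List A} :
      ListEmb r l ys → ListEmb r l (y :: ys)

theorem listEmb_of_sublistForall₂ {A : Type*} {r : A → A → Prop} {l₁ l₂ : List A}
    (h : List.SublistForall₂ r l₁ l₂) : ListEmb r l₁ l₂ := by
  induction h with
  | nil => exact ListEmb.nil _
  | cons hr _ ih => exact ListEmb.cons hr ih
  | cons_right _ ih => exact ListEmb.skip ih

/-- Higman's lemma: the sublist embedding over a well-quasi-ordered set is a
well-quasi-ordering. -/
theorem higman {A : Type*} (r : A → A → Prop)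
    (hrefl : ∀ a, r a a)
    (htrans : ∀ a b c, r a b → r b c → r a c)
    (hwqo : ∀ a : ℕ → A, ∃ i j, i < j ∧ r (a i) (a j)) :
    ∀ f : ℕ → List A, ∃ i j, i < j ∧ ListEmb r (f i) (f j) := by
  haveI : IsRefl A r := ⟨hrefl⟩
  haveI : IsTrans A r := ⟨htrans⟩
  have hs : (Set.univ : Set A).PartiallyWellOrderedOn r := by
    intro f
    exact hwqo (fun n => (f n).1)
  haveI : IsPreorder A r := { refl := hrefl, trans := htrans }
  have h := hs.partiallyWellOrderedOn_sublistForall₂ r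
  intro f
  obtain ⟨i, j, hij, h⟩ := h (fun n => ⟨f n, fun x _ => Set.mem_univ x⟩)
  exact ⟨i, j, hij, listEmb_of_sublistForall₂ h⟩
end

section
/- The relation defined on configurations (nonempty lists of timed function-application labels, each label being a pair of a function name and a natural-number timestamp, with all timestamps in one configuration distinct) by Turchin's condition is, in general, not transitive: there exist timed configurations C₁, C₂, C₃ occurring in some sequence with C₁ ◁ C₂ and C₂ ◁ C₃ but ¬(C₁ ◁ C₃). -/
/-- Function names. -/
inductive FName : Type
  | Fab | Fb | Fc | C | E
  deriving DecidableEq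

/-- A timed configuration: a list of (function name, timestamp) pairs.
Elements are numbered from 1; the `i`-th element of `C` is `C[i-1]?`. -/
abbrev TConf := List (FName × ℕ)

/-- Turchin's relation `Cᵢ ◁ Cⱼ` on timed configurations: for `k = |Cᵢ| ≤ m = |Cⱼ|`
and `δ = m - k`, there is `l` with `1 < l ≤ k` such that the elements `l+s` of `Cᵢ`
equal (name and timestamp) the elements `δ+l+s` of `Cⱼ` for `0 ≤ s ≤ k-l`, the
`(l-1)`-th element of `Cᵢ` differs from the `(δ+l-1)`-th element of `Cⱼ`, and for
`0 < s < l` the `s`-th elements of `Cᵢ` and `Cⱼ` carry equal function names. -/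
def Turchin (Ci Cj : TConf) : Prop :=
  Ci.length ≤ Cj.length ∧
  ∃ l : ℕ, 1 < l ∧ l ≤ Ci.length ∧
    (∀ s : ℕ, s ≤ Ci.length - l →
      Ci[l + s - 1]? = Cj[Cj.length - Ci.length + l + s - 1]?) ∧
    Ci[l - 2]? ≠ Cj[Cj.length - Ci.length + l - 2]? ∧
    (∀ s : ℕ, 0 < s → s < l →
      (Ci[s - 1]?).map Prod.fst = (Cj[s - 1]?).map Prod.fst)

/-- Turchin's relation is, in general, not transitive: there are timed configurations
(nonempty, with pairwise distinct timestamps) with `C₁ ◁ C₂` and `C₂ ◁ C₃` but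
`¬ (C₁ ◁ C₃)`. -/
theorem turchin_not_transitive :
    ∃ C₁ C₂ C₃ : TConf,
      (C₁ ≠ [] ∧ (C₁.map Prod.snd).Nodup) ∧
      (C₂ ≠ [] ∧ (C₂.map Prod.snd).Nodup) ∧
      (C₃ ≠ [] ∧ (C₃.map Prod.snd).Nodup) ∧
      Turchin C₁ C₂ ∧ Turchin C₂ C₃ ∧ ¬ Turchin C₁ C₃ := by
  refine ⟨[(.Fab,3),(.Fb,2),(.C,1)], [(.Fab,5),(.Fc,4),(.Fb,2),(.C,1)],
    [(.Fab,10),(.Fc,9),(.Fb,7),(.E,6),(.C,1)],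
    ⟨by simp, by decide⟩, ⟨by simp, by decide⟩, ⟨by simp, by decide⟩, ?_, ?_, ?_⟩
  · refine ⟨by simp, 2, by norm_num, by simp, ?_, by decide, ?_⟩
    · intro s hs
      simp only [List.length] at hs
      interval_cases s <;> rfl
    · intro s h1 h2
      interval_cases s <;> rfl
  · refine ⟨by simp, 4, by norm_num, by simp, ?_, by decide, ?_⟩
    · intro s hs
      simp only [List.length] at hs
      interval_cases s <;> rfl
    · intro s h1 h2
      interval_cases s <;> rfl
  · rintro ⟨-, l, hl1, hl2, hsuf, hne, hname⟩
    simp only [List.length] at hl2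
    interval_cases l
    · exact absurd (hsuf 0 (by norm_num)) (by decide)
    · exact absurd (hname 2 (by norm_num) (by norm_num)) (by decide)
end

section
/- The encoding function from the data subset (ground expressions: symbols, nil, cons of a term and an expression, and parenthesized expressions, with no variables or function applications) into data is injective, and its image is a proper subset of the data set: in particular the datum (Var 's' name) is not in the image of the encoding. -/
/-- Ground data: nil `[]`, cons of a symbol onto data, and cons of a parenthesized
datum onto data (no variables, no function applications). -/
inductive Data (S : Type) : Type
  | nil : Data S
  | consSym : S → Data S → Data S
  | consPar : Data S → Data S → Data S

/-- The encoding function: symbols and nil are fixed, cons distributes, and a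
parenthesized datum `(d)` is encoded as `('*' : d̲)`. -/
def encode {S : Type} (star : S) : Data S → Data S
  | .nil => .nil
  | .consSym σ d => .consSym σ (encode star d)
  | .consPar p d => .consPar (.consSym star (encode star p)) (encode star d)

/-- The encoding is injective and its image is a proper subset of the data set:
in particular the datum `(Var 's' n)` is not the encoding of any datum. -/
theorem encode_injective_and_not_surjective {S : Type}
    (star varSym sSym : S)
    (h₁ : star ≠ varSym) (h₂ : star ≠ sSym) (h₃ : varSym ≠ sSym) :
    Function.Injective (encode (S := S) star) ∧
      ∀ (n : S) (e : Data S),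
        encode star e ≠
          .consPar (.consSym varSym (.consSym sSym (.consSym n .nil))) .nil := by
  constructor
  · intro a
    induction a with
    | nil => intro b h; cases b <;> simp [encode] at h ⊢
    | consSym σ d ih =>
      intro b h
      cases b with
      | nil => simp [encode] at h
      | consSym τ e =>
        simp only [encode, Data.consSym.injEq] at h
        exact h.1 ▸ (ih h.2) ▸ rfl
      | consPar p e => simp [encode] at h
    | consPar p d ihp ihd =>
      intro b h
      cases b with
      | nil => simp [encode] at h
      | consSym τ e => simp [encode] at h
      | consPar q e =>
        simp only [encode, Data.consPar.injEq, Data.consSym.injEq, true_and] at h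
        exact (ihp h.1) ▸ (ihd h.2) ▸ rfl
  · intro n e h
    cases e <;> simp [encode] at h
    exact h₁ h.1.1
end

section
/- In the simple pattern-matching language, if every variable occurs at most once in the pattern p (linearity) and matching of ground data d against p succeeds producing an environment env, then applying the substitution env to p yields exactly d. -/
/-- Patterns: nil, an e-variable (binding the whole remaining data), an s-variable
followed by a pattern, a symbol followed by a pattern, or a parenthesized pattern
followed by a pattern. -/
inductive Pat (S : Type) : Type
  | nil : Pat S
  | evar (n : ℕ) : Pat S
  | svar (n : ℕ) (p : Pat S) : Pat S
  | sym (σ : S) (p : Pat S) : Pat S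
  | par (p₁ p₂ : Pat S) : Pat S

/-- Ground data: patterns with no variables. -/
inductive Dat (S : Type) : Type
  | nil : Dat S
  | sym (σ : S) (d : Dat S) : Dat S
  | par (d₁ d₂ : Dat S) : Dat S

/-- Environments bind variable names to either a symbol (s-variables) or a whole
datum (e-variables). -/
abbrev Env (S : Type) := List (ℕ × (S ⊕ Dat S))

/-- Structural matching of ground data against a pattern, producing an environment. -/
def pmatch {S : Type} [DecidableEq S] : Pat S → Dat S → Option (Env S)
  | .nil, .nil => some []
  | .evar n, d => some [(n, Sum.inr d)]
  | .svar n p, .sym σ d => (pmatch p d).map (fun e => (n, Sum.inl σ) :: e)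
  | .sym σ p, .sym τ d => if σ = τ then pmatch p d else none
  | .par p₁ p₂, .par d₁ d₂ => do
      let e₁ ← pmatch p₁ d₁
      let e₂ ← pmatch p₂ d₂
      pure (e₁ ++ e₂)
  | _, _ => none

def lookupS {S : Type} (env : Env S) (n : ℕ) : Option S :=
  match env.lookup n with
  | some (Sum.inl σ) => some σ
  | _ => none

def lookupE {S : Type} (env : Env S) (n : ℕ) : Option (Dat S) :=
  match env.lookup n with
  | some (Sum.inr d) => some d
  | _ => none

/-- Applying an environment to a pattern, replacing variables by their values. -/
def subst {S : Type} (env : Env S) : Pat S → Option (Dat S)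
  | .nil => some .nil
  | .evar n => lookupE env n
  | .svar n p => do
      let σ ← lookupS env n
      let d ← subst env p
      pure (.sym σ d)
  | .sym σ p => (subst env p).map (.sym σ)
  | .par p₁ p₂ => do
      let d₁ ← subst env p₁
      let d₂ ← subst env p₂
      pure (.par d₁ d₂)

/-- The list of variable names occurring in a pattern. -/
def Pat.vars {S : Type} : Pat S → List ℕ
  | .nil => []
  | .evar n => [n]
  | .svar n p => n :: p.vars
  | .sym _ p => p.vars
  | .par p₁ p₂ => p₁.vars ++ p₂.vars

-- appended after the defs
theorem pmatch_keys {S : Type} [DecidableEq S] :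
    ∀ (p : Pat S) (d : Dat S) (env : Env S), pmatch p d = some env →
      env.map Prod.fst = p.vars
  | .nil, .nil, env, h => by simp [pmatch] at h; subst h; rfl
  | .evar n, d, env, h => by
      simp [pmatch] at h; subst h; rfl
  | .svar n p, .sym σ d, env, h => by
      simp [pmatch, Option.map_eq_some_iff] at h
      obtain ⟨e, he, rfl⟩ := h
      simp [Pat.vars, pmatch_keys p d e he]
  | .sym σ p, .sym τ d, env, h => by
      simp [pmatch] at h
      obtain ⟨rfl, h⟩ := h
      exact pmatch_keys p d env h
  | .par p₁ p₂, .par d₁ d₂, env, h => by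
      simp [pmatch, Option.bind_eq_some_iff] at h
      obtain ⟨e₁, h₁, e₂, h₂, rfl⟩ := h
      simp [Pat.vars, pmatch_keys p₁ d₁ e₁ h₁, pmatch_keys p₂ d₂ e₂ h₂]

theorem lookup_append_left {S : Type} (e₁ e₂ : Env S) (n : ℕ)
    (h : n ∈ e₁.map Prod.fst) : (e₁ ++ e₂).lookup n = e₁.lookup n := by
  induction e₁ with
  | nil => simp at h
  | cons a l ih =>
    obtain ⟨m, v⟩ := a
    by_cases hn : n = m
    · subst hn; simp [List.lookup]
    · have hn' : (n == m) = false := by simp [hn]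
      simp only [List.cons_append, List.lookup, hn']
      apply ih
      simpa [hn] using h

theorem lookup_append_right {S : Type} (e₁ e₂ : Env S) (n : ℕ)
    (h : n ∉ e₁.map Prod.fst) : (e₁ ++ e₂).lookup n = e₂.lookup n := by
  induction e₁ with
  | nil => rfl
  | cons a l ih =>
    obtain ⟨m, v⟩ := a
    simp only [List.map_cons, List.mem_cons] at h
    push_neg at h
    have hn' : (n == m) = false := by simp [h.1]
    simp only [List.cons_append, List.lookup, hn']
    exact ih h.2

theorem subst_congr {S : Type} (env env' : Env S) (p : Pat S)
    (h : ∀ n ∈ p.vars, env'.lookup n = env.lookup n) :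
    subst env' p = subst env p := by
  induction p with
  | nil => rfl
  | evar n => simp [subst, lookupE, h n (by simp [Pat.vars])]
  | svar n p ih =>
    simp [subst, lookupS, h n (by simp [Pat.vars]),
      ih (fun m hm => h m (by simp [Pat.vars, hm]))]
  | sym σ p ih => simp [subst, ih (fun m hm => h m hm)]
  | par p₁ p₂ ih₁ ih₂ =>
    simp [subst, ih₁ (fun m hm => h m (by simp [Pat.vars, hm])),
      ih₂ (fun m hm => h m (by simp [Pat.vars, hm]))]

theorem subst_of_pmatch' {S : Type} [DecidableEq S] :
    ∀ (p : Pat S) (d : Dat S) (env : Env S),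
    p.vars.Nodup → pmatch p d = some env → subst env p = some d
  | .nil, .nil, env, _, h => by simp [pmatch] at h; subst h; rfl
  | .evar n, d, env, _, h => by
      simp [pmatch] at h; subst h; simp [subst, lookupE, List.lookup]
  | .svar n p, .sym σ d, env, hlin, h => by
      simp [pmatch, Option.map_eq_some_iff] at h
      obtain ⟨e, he, rfl⟩ := h
      simp [Pat.vars] at hlin
      have hk := pmatch_keys p d e he
      have ih := subst_of_pmatch' p d e hlin.2 he
      have : subst ((n, Sum.inl σ) :: e) p = subst e p := by
        apply subst_congr
        intro m hm
        have hb : (m == n) = false := by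
          simp; rintro rfl; exact hlin.1 hm
        simp [List.lookup, hb]
      simp [subst, lookupS, List.lookup, this, ih]
  | .sym σ p, .sym τ d, env, hlin, h => by
      simp [pmatch] at h
      obtain ⟨rfl, h⟩ := h
      simp [subst, subst_of_pmatch' p d env hlin h]
  | .par p₁ p₂, .par d₁ d₂, env, hlin, h => by
      simp [pmatch, Option.bind_eq_some_iff] at h
      obtain ⟨e₁, h₁, e₂, h₂, rfl⟩ := h
      simp [Pat.vars, List.nodup_append] at hlin
      obtain ⟨hl₁, hl₂, hdisj⟩ := hlin
      have k₁ := pmatch_keys p₁ d₁ e₁ h₁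
      have s₁ : subst (e₁ ++ e₂) p₁ = some d₁ := by
        rw [subst_congr e₁ (e₁ ++ e₂) p₁ ?_]
        · exact subst_of_pmatch' p₁ d₁ e₁ hl₁ h₁
        · intro m hm
          exact lookup_append_left e₁ e₂ m (by rw [k₁]; exact hm)
      have s₂ : subst (e₁ ++ e₂) p₂ = some d₂ := by
        rw [subst_congr e₂ (e₁ ++ e₂) p₂ ?_]
        · exact subst_of_pmatch' p₂ d₂ e₂ hl₂ h₂
        · intro m hm
          exact lookup_append_right e₁ e₂ m (by rw [k₁]; intro hc; exact hdisj m hc m hm rfl)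
      simp [subst, s₁, s₂]

/-- If the pattern `p` is linear (each variable occurs at most once) and matching
the ground data `d` against `p` succeeds with environment `env`, then applying the
substitution `env` to `p` yields exactly `d`. -/
theorem subst_of_pmatch {S : Type} [DecidableEq S]
    (p : Pat S) (d : Dat S) (env : Env S)
    (hlin : p.vars.Nodup) (h : pmatch p d = some env) :
    subst env p = some d := by
  exact subst_of_pmatch' p d env hlin h
end

section
/- In the Synapse N+1 counting model, the stronger invariant dirty + valid ≤ max over histories is not needed; instead show the invariant dirty ≤ 1 ∧ dirty * valid = 0 is inductive: it holds initially and is preserved by each of the five guarded transitions. -/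
/-- A state of the counting abstraction: counters of invalid, dirty and valid
cache lines. -/
structure SynState where
  invalid : ℕ
  dirty : ℕ
  valid : ℕ

/-- The guarded transitions of the Synapse N+1 counting model. -/
inductive SynStep : SynState → SynState → Prop
  | rh (s : SynState) (h : s.dirty + s.valid ≥ 1) : SynStep s s
  | rm (s : SynState) (h : s.invalid ≥ 1) :
      SynStep s ⟨s.invalid + s.dirty - 1, 0, s.valid + 1⟩
  | wh1 (s : SynState) (h : s.dirty ≥ 1) : SynStep s s
  | wh2 (s : SynState) (h : s.valid ≥ 1) :
      SynStep s ⟨s.invalid + s.dirty + s.valid - 1, 1, 0⟩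
  | wm (s : SynState) (h : s.invalid ≥ 1) :
      SynStep s ⟨s.invalid + s.dirty + s.valid - 1, 1, 0⟩

/-- The invariant `P(i,d,v) := d ≤ 1 ∧ d * v = 0`. -/
def SynInv (s : SynState) : Prop := s.dirty ≤ 1 ∧ s.dirty * s.valid = 0

/-- The invariant `dirty ≤ 1 ∧ dirty * valid = 0` is inductive: it holds in every
initial state `(n, 0, 0)` with `n ≥ 1` and is preserved by each of the five guarded
transitions. -/
theorem synapse_inv_inductive :
    (∀ n : ℕ, n ≥ 1 → SynInv ⟨n, 0, 0⟩) ∧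
    (∀ s s' : SynState, SynStep s s' → SynInv s → SynInv s') := by
  refine ⟨fun n _ => ⟨by simp [SynInv], by simp [SynInv]⟩, fun s s2 hstep hinv => ?_⟩
  cases hstep <;> simp_all [SynInv]
end

section
/- The functional model of the Synapse N+1 protocol given as a recursive function over a finite event list terminates and is a total predicate returning True on all inputs whose induced transition sequences are realizable: for every finite list of events and every initial count n ≥ 1 represented in unary, the Loop function, defined by structural recursion on the event list and consuming one event per step, terminates; moreover if every event in the list has its guard satisfied at the point it is consumed, the result of the final Test is True. -/
/-- The protocol events handled by the functional model. -/
inductive Ev : Type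
  | rm | wh2 | wm

/-- A state of the unary-list model: the Invalid, Dirty and Valid counters, each a
list of unit symbols `I`. -/
abbrev UState := List Unit × List Unit × List Unit

/-- The partial event step of the functional Synapse N+1 model. -/
def Event : Ev → UState → Option UState
  | .rm, (_ :: is, ds, vs) => some (ds ++ is, [], () :: vs)
  | .wh2, (is, ds, _ :: vs) => some (vs ++ ds ++ is, [()], [])
  | .wm, (_ :: is, ds, vs) => some (vs ++ ds ++ is, [()], [])
  | _, _ => none

/-- The safety test: `False` iff Dirty and Valid are both nonempty, or Dirty has at
least two elements. -/
def Test : UState → Bool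
  | (_, ds, vs) => !((!ds.isEmpty && !vs.isEmpty) || decide (ds.length ≥ 2))

/-- The main loop, defined by structural recursion on the event list and consuming
one event per step (hence terminating on every input). -/
def Loop : List Ev → UState → Option Bool
  | [], s => some (Test s)
  | t :: ts, s => (Event t s).bind (Loop ts)

lemma event_test {t : Ev} {s s' : UState} (h : Event t s = some s') :
    Test s' = true := by
  obtain ⟨is, ds, vs⟩ := s
  cases t <;> cases is <;> cases vs <;> simp_all [Event, Test] <;> simp [← h]

lemma loop_safe : ∀ (evs : List Ev) (s : UState), Test s = true →
    (Loop evs s).isSome → Loop evs s = some true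
  | [], s, hs, _ => by simpa [Loop] using hs
  | t :: ts, s, hs, h => by
    cases he : Event t s with
    | none => simp [Loop, he] at h
    | some s' =>
      simp only [Loop, he, Option.bind_some] at h ⊢
      exact loop_safe ts s' (event_test he) h

/-- The functional unary-list model of Synapse N+1 inherits the safety invariant:
`Loop` is a total function, and for every finite event list whose induced transition
sequence is realizable (all `Event` steps are defined) from the initial state
`(Iⁿ, [], [])` with `n ≥ 1`, the final `Test` returns `True`. -/
theorem loop_total_and_safe :
    (∀ (evs : List Ev) (s : UState), ∃ r : Option Bool, Loop evs s = r) ∧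
    (∀ (n : ℕ), n ≥ 1 → ∀ evs : List Ev,
      (Loop evs (List.replicate n (), [], [])).isSome →
      Loop evs (List.replicate n (), [], []) = some true) := by
  constructor
  · exact fun evs s => ⟨_, rfl⟩
  · intro n hn evs h
    exact loop_safe evs _ (by cases n with | zero => omega | succ m => simp [Test]) h
end
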